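/- With the hypotheses in the context, the map Γ restricted to Grid(𝒯) is a size-preserving bijection from Grid(𝒯) onto Grid(𝒯'). In particular, for every n the number of gridded permutations of size n in Grid(𝒯) equals the number of gridded permutations of size n in Grid(𝒯') (row separation is an equivalence strategy). -/

import Mathlib

/-- A (raw) gridded permutation: a permutation of `Fin n` (recording the size-`n`
underlying permutation) together with a cell in `ℕ × ℕ` for each index. -/
structure GP where
  n : ℕ
  perm : Equiv.Perm (Fin n)
  cells : Fin n → ℕ × ℕ

/-- The consistency condition for a gridded permutation: cells are weakly
increasing in the x-coordinate along positions, and weakly increasing in the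
y-coordinate along values. -/
def GP.Consistent (g : GP) : Prop :=
  (∀ i j : Fin g.n, i < j → (g.cells i).1 ≤ (g.cells j).1) ∧
  (∀ i j : Fin g.n, g.perm i < g.perm j → (g.cells i).2 ≤ (g.cells j).2)

/-- `g.Contains h` means `h ≤ g`: there is a strictly increasing choice of
indices of `g` whose values are order-isomorphic to `h` and whose cells agree
with those of `h`. -/
def GP.Contains (g h : GP) : Prop :=
  ∃ f : Fin h.n → Fin g.n, StrictMono f ∧
    (∀ i j : Fin h.n, (h.perm i < h.perm j ↔ g.perm (f i) < g.perm (f j))) ∧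
    ∀ i : Fin h.n, g.cells (f i) = h.cells i

/-- `𝒢^(t,u)`: the set of (consistent) gridded permutations all of whose cells lie in
`{0,…,t−1} × {0,…,u−1}`. -/
def Ggrid (t u : ℕ) : Set GP :=
  {g | g.Consistent ∧ ∀ i : Fin g.n, (g.cells i).1 < t ∧ (g.cells i).2 < u}

/-- `Grid` of the tiling `((t,u), O, R)`: the gridded permutations in `𝒢^(t,u)` avoiding
every obstruction in `O` and containing at least one element of every requirement
list in `R`. -/
def GridSet (t u : ℕ) (O : Set GP) (R : List (Set GP)) : Set GP :=
  {g | g ∈ Ggrid t u ∧ (∀ o ∈ O, ¬ g.Contains o) ∧ ∀ Ri ∈ R, ∃ x ∈ Ri, g.Contains x}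

/-- The size-1 gridded permutation in cell `d`. -/
def gp1 (d : ℕ × ℕ) : GP := ⟨1, Equiv.refl _, fun _ => d⟩

/-- The size-2 gridded permutation with underlying pattern `12` and cells `d1, d2`. -/
def gp12 (d1 d2 : ℕ × ℕ) : GP := ⟨2, Equiv.refl _, ![d1, d2]⟩

/-- The size-2 gridded permutation with underlying pattern `21` and cells `d1, d2`. -/
def gp21 (d1 d2 : ℕ × ℕ) : GP := ⟨2, Equiv.swap 0 1, ![d1, d2]⟩

open Classical in
/-- The cell map `γ` of row separation at row `r` with columns `S`. -/
noncomputable def gammaCell (r : ℕ) (S : Set ℕ) (d : ℕ × ℕ) : ℕ × ℕ :=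
  if d.2 < r ∨ (d.2 = r ∧ d.1 ∈ S) then d else (d.1, d.2 + 1)

/-- The map `Γ` of row separation, applying `γ` to every cell. -/
noncomputable def rowSepMap (r : ℕ) (S : Set ℕ) (g : GP) : GP :=
  ⟨g.n, g.perm, fun i => gammaCell r S (g.cells i)⟩

/-- The critical row patterns with respect to row `r` and column set `S`. -/
def Crit (r : ℕ) (S : Set ℕ) : Set GP :=
  {x | (∃ i i' : ℕ, i ∈ S ∧ i' ∉ S ∧ i < i' ∧ x = gp21 (i, r) (i', r)) ∨
       (∃ i i' : ℕ, i' ∉ S ∧ i ∈ S ∧ i' < i ∧ x = gp12 (i', r) (i, r))}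

/-- `g` avoids all critical row patterns with respect to `r` and `S`. -/
def AvoidsCrit (r : ℕ) (S : Set ℕ) (g : GP) : Prop :=
  ∀ x ∈ Crit r S, ¬ g.Contains x

/-- The number of gridded permutations of size `m` in a set `X`. -/
noncomputable def sizeCount (X : Set GP) (m : ℕ) : ℕ :=
  Nat.card {g : GP // g ∈ X ∧ g.n = m}

/-- `Grid(𝒯')` for the tiling `𝒯'` produced by row separation at row `r` with
column set `S` from the tiling `𝒯 = ((t,u), O, R)`. -/
noncomputable def sepGrid (t u r : ℕ) (S : Set ℕ) (O : Set GP) (R : List (Set GP)) :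
    Set GP :=
  GridSet t (u + 1)
    ((rowSepMap r S '' (O \ (Crit r S ∩ Ggrid t u))) ∪
      ({x | ∃ i : ℕ, i < t ∧ i ∉ S ∧ x = gp1 (i, r)} ∪
       {x | ∃ i : ℕ, i < t ∧ i ∈ S ∧ x = gp1 (i, r + 1)}))
    (R.map fun Ri => rowSepMap r S '' Ri)


/-! ### Auxiliary lemmas for row separation -/

/-- The inverse cell map `δ`. -/
def deltaCell (r : ℕ) (d : ℕ × ℕ) : ℕ × ℕ := if d.2 ≤ r then d else (d.1, d.2 - 1)

lemma delta_gamma (r : ℕ) (S : Set ℕ) (d : ℕ × ℕ) :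
    deltaCell r (gammaCell r S d) = d := by
  unfold gammaCell deltaCell
  split
  · next h =>
    have : d.2 ≤ r := by rcases h with h | h; · omega
                         · exact le_of_eq h.1
    simp [this]
  · next h =>
    have h2 : r ≤ d.2 := by by_contra hc; exact h (Or.inl (by omega))
    have : ¬ (d.2 + 1 ≤ r) := by omega
    simp [this]

lemma gammaCell_inj (r : ℕ) (S : Set ℕ) : Function.Injective (gammaCell r S) :=
  Function.LeftInverse.injective (delta_gamma r S)

/-- The inverse map `Δ` of `Γ`. -/
def rowSepInv (r : ℕ) (g : GP) : GP := ⟨g.n, g.perm, fun i => deltaCell r (g.cells i)⟩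

lemma rowSepInv_rowSepMap (r : ℕ) (S : Set ℕ) (g : GP) :
    rowSepInv r (rowSepMap r S g) = g := by
  cases g with
  | mk n p c =>
    simp only [rowSepInv, rowSepMap, GP.mk.injEq, heq_eq_eq, true_and]
    funext i
    exact delta_gamma r S (c i)

lemma rowSepMap_injective (r : ℕ) (S : Set ℕ) : Function.Injective (rowSepMap r S) :=
  Function.LeftInverse.injective (rowSepInv_rowSepMap r S)

lemma rowSepMap_contains_iff (r : ℕ) (S : Set ℕ) (g h : GP) :
    (rowSepMap r S g).Contains (rowSepMap r S h) ↔ g.Contains h := by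
  constructor
  · rintro ⟨f, hf, hp, hc⟩
    exact ⟨f, hf, hp, fun i => gammaCell_inj r S (hc i)⟩
  · rintro ⟨f, hf, hp, hc⟩
    exact ⟨f, hf, hp, fun i => congrArg (gammaCell r S) (hc i)⟩

lemma contains_gp1_iff (g : GP) (d : ℕ × ℕ) :
    g.Contains (gp1 d) ↔ ∃ k, g.cells k = d := by
  unfold GP.Contains gp1
  constructor
  · rintro ⟨f, -, -, hc⟩
    exact ⟨f 0, hc 0⟩
  · rintro ⟨k, hk⟩
    refine ⟨fun _ => k, ?_, ?_, fun i => hk⟩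
    · intro a b hab
      exact absurd hab (by simp [Subsingleton.elim a b])
    · intro i j
      have : i = j := Subsingleton.elim i j
      subst this
      simp

lemma contains_gp21_iff (g : GP) (d1 d2 : ℕ × ℕ) :
    g.Contains (gp21 d1 d2) ↔
      ∃ p q : Fin g.n, p < q ∧ g.perm q < g.perm p ∧ g.cells p = d1 ∧ g.cells q = d2 := by
  unfold GP.Contains gp21
  constructor
  · rintro ⟨f, hf, hp, hc⟩
    refine ⟨f 0, f 1, hf (show (0:Fin 2) < 1 by decide), ?_, ?_, ?_⟩
    · exact (hp 1 0).mp (by simp [gp21, Equiv.swap_apply_left, Equiv.swap_apply_right])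
    · simpa [gp21] using hc 0
    · simpa [gp21] using hc 1
  · rintro ⟨p, q, hpq, hperm, hc1, hc2⟩
    refine ⟨![p, q], ?_, ?_, ?_⟩
    · intro a b hab
      fin_cases a <;> fin_cases b <;> simp_all
    · intro i j
      fin_cases i <;> fin_cases j <;>
        simp [gp21, Equiv.swap_apply_left, Equiv.swap_apply_right, hperm, hperm.asymm,
          hperm.le.not_gt]
    · intro i
      fin_cases i <;> simp [gp21, hc1, hc2]

lemma contains_gp12_iff (g : GP) (d1 d2 : ℕ × ℕ) :
    g.Contains (gp12 d1 d2) ↔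
      ∃ p q : Fin g.n, p < q ∧ g.perm p < g.perm q ∧ g.cells p = d1 ∧ g.cells q = d2 := by
  unfold GP.Contains gp12
  constructor
  · rintro ⟨f, hf, hp, hc⟩
    refine ⟨f 0, f 1, hf (show (0:Fin 2) < 1 by decide), ?_, ?_, ?_⟩
    · exact (hp 0 1).mp (by simp [gp12])
    · simpa [gp12] using hc 0
    · simpa [gp12] using hc 1
  · rintro ⟨p, q, hpq, hperm, hc1, hc2⟩
    refine ⟨![p, q], ?_, ?_, ?_⟩
    · intro a b hab
      fin_cases a <;> fin_cases b <;> simp_all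
    · intro i j
      fin_cases i <;> fin_cases j <;>
        simp [gp12, hperm, hperm.asymm, hperm.le.not_gt]
    · intro i
      fin_cases i <;> simp [gp12, hc1, hc2]


lemma gammaCell_fst (r : ℕ) (S : Set ℕ) (d : ℕ × ℕ) : (gammaCell r S d).1 = d.1 := by
  unfold gammaCell; split <;> rfl

lemma gammaCell_snd (r : ℕ) (S : Set ℕ) (d : ℕ × ℕ) :
    (gammaCell r S d).2 = d.2 ∨ (gammaCell r S d).2 = d.2 + 1 := by
  unfold gammaCell; split
  · exact Or.inl rfl
  · exact Or.inr rfl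

lemma deltaCell_fst (r : ℕ) (d : ℕ × ℕ) : (deltaCell r d).1 = d.1 := by
  unfold deltaCell; split <;> rfl

lemma gamma_delta_cond (r : ℕ) (S : Set ℕ) (d : ℕ × ℕ)
    (h1 : d.2 = r → d.1 ∈ S) (h2 : d.2 = r + 1 → d.1 ∉ S) :
    gammaCell r S (deltaCell r d) = d := by
  obtain ⟨x, y⟩ := d
  simp only at h1 h2
  rcases le_or_gt y r with hyr | hyr
  · have hd : deltaCell r (x, y) = (x, y) := by
      unfold deltaCell; exact if_pos hyr
    rw [hd]
    unfold gammaCell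
    rcases Nat.lt_or_ge y r with h | h
    · exact if_pos (Or.inl h)
    · have hy : y = r := le_antisymm hyr h
      exact if_pos (Or.inr ⟨hy, h1 hy⟩)
  · have hd : deltaCell r (x, y) = (x, y - 1) := by
      unfold deltaCell; exact if_neg (by omega)
    rw [hd]
    unfold gammaCell
    have hcond : ¬ (((x, y - 1) : ℕ × ℕ).2 < r ∨
        (((x, y - 1) : ℕ × ℕ).2 = r ∧ ((x, y - 1) : ℕ × ℕ).1 ∈ S)) := by
      push_neg
      refine ⟨show r ≤ y - 1 by omega, fun he => ?_⟩
      have he' : y - 1 = r := he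
      exact h2 (by omega)
    rw [if_neg hcond]
    show (x, y - 1 + 1) = (x, y)
    simp only [Prod.mk.injEq]
    exact ⟨trivial, by omega⟩

lemma gp21_mem_Ggrid {t u r a b : ℕ} (hab : a ≤ b) (hat : a < t) (hbt : b < t)
    (hru : r < u) : gp21 (a, r) (b, r) ∈ Ggrid t u := by
  unfold gp21 Ggrid GP.Consistent
  refine ⟨⟨fun i j hij => ?_, fun i j hij => ?_⟩, fun i => ?_⟩
  · fin_cases i <;> fin_cases j <;> simp_all
  · fin_cases i <;> fin_cases j <;> simp_all
  · fin_cases i <;> simp_all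

lemma gp12_mem_Ggrid {t u r a b : ℕ} (hab : a ≤ b) (hat : a < t) (hbt : b < t)
    (hru : r < u) : gp12 (a, r) (b, r) ∈ Ggrid t u := by
  unfold gp12 Ggrid GP.Consistent
  refine ⟨⟨fun i j hij => ?_, fun i j hij => ?_⟩, fun i => ?_⟩
  · fin_cases i <;> fin_cases j <;> simp_all
  · fin_cases i <;> fin_cases j <;> simp_all
  · fin_cases i <;> simp_all

/-- Any element of `Grid(𝒯)` avoids the critical row patterns, since the critical
patterns lying in the grid are obstructions. -/
lemma avoidsCrit_of_mem_gridSet {t u r : ℕ} (hr : r < u) {S : Set ℕ} {O : Set GP}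
    {R : List (Set GP)} (hC : Crit r S ∩ Ggrid t u ⊆ O) {g : GP}
    (hg : g ∈ GridSet t u O R) : AvoidsCrit r S g := by
  obtain ⟨⟨hcons, hbound⟩, havoid, -⟩ := hg
  rintro x hx hcon
  refine havoid x (hC ⟨hx, ?_⟩) hcon
  rcases hx with ⟨i, i', hiS, hi'S, hlt, rfl⟩ | ⟨i, i', hi'S, hiS, hlt, rfl⟩
  · obtain ⟨p, q, hpq, hperm, hc1, hc2⟩ := (contains_gp21_iff g _ _).mp hcon
    have h1 := hbound p; have h2 := hbound q
    rw [hc1] at h1; rw [hc2] at h2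
    exact gp21_mem_Ggrid (le_of_lt hlt) h1.1 h2.1 hr
  · obtain ⟨p, q, hpq, hperm, hc1, hc2⟩ := (contains_gp12_iff g _ _).mp hcon
    have h1 := hbound p; have h2 := hbound q
    rw [hc1] at h1; rw [hc2] at h2
    exact gp12_mem_Ggrid (le_of_lt hlt) h1.1 h2.1 hr

/-- Forward direction: `Γ` maps `Grid(𝒯)` into `Grid(𝒯')`. -/
lemma rowSepMap_mem_sepGrid (t u r : ℕ) (hr : r < u) (S : Set ℕ) (O : Set GP)
    (R : List (Set GP)) (hC : Crit r S ∩ Ggrid t u ⊆ O) {g : GP}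
    (hg : g ∈ GridSet t u O R) : rowSepMap r S g ∈ sepGrid t u r S O R := by
  have hav : AvoidsCrit r S g := avoidsCrit_of_mem_gridSet hr hC hg
  obtain ⟨⟨hcons, hbound⟩, havoid, hreq⟩ := hg
  refine ⟨⟨⟨fun i j hij => ?_, fun i j hp => ?_⟩, fun i => ⟨?_, ?_⟩⟩, ?_, ?_⟩
  · -- x-consistency
    show (gammaCell r S (g.cells i)).1 ≤ (gammaCell r S (g.cells j)).1
    rw [gammaCell_fst, gammaCell_fst]
    exact hcons.1 i j hij
  · -- y-consistency
    show (gammaCell r S (g.cells i)).2 ≤ (gammaCell r S (g.cells j)).2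
    have hp' : g.perm i < g.perm j := hp
    have hy := hcons.2 i j hp'
    unfold gammaCell
    split
    · split
      · exact hy
      · simp only; omega
    · next hne =>
      split
      · next hpos =>
        simp only
        have hige : r ≤ (g.cells i).2 := by
          by_contra hcc
          exact hne (Or.inl (by omega))
        rcases hpos with hjlt | ⟨hjeq, hjS⟩
        · omega
        · have hieq : (g.cells i).2 = r := by omega
          have hiS : (g.cells i).1 ∉ S := fun hmem => hne (Or.inr ⟨hieq, hmem⟩)
          exfalso
          rcases lt_trichotomy i j with hij | hij | hij
          · have hx : (g.cells i).1 ≤ (g.cells j).1 := hcons.1 i j hij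
            have hxne : (g.cells i).1 ≠ (g.cells j).1 := fun he => hiS (he ▸ hjS)
            refine hav (gp12 ((g.cells i).1, r) ((g.cells j).1, r))
              (Or.inr ⟨(g.cells j).1, (g.cells i).1, hiS, hjS, lt_of_le_of_ne hx hxne, rfl⟩)
              ((contains_gp12_iff g _ _).mpr ⟨i, j, hij, hp', ?_, ?_⟩)
            · rw [← hieq]
            · rw [← hjeq]
          · exact absurd hp' (by rw [hij]; exact lt_irrefl _)
          · have hx : (g.cells j).1 ≤ (g.cells i).1 := hcons.1 j i hij
            have hxne : (g.cells j).1 ≠ (g.cells i).1 := fun he => hiS (he ▸ hjS)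
            refine hav (gp21 ((g.cells j).1, r) ((g.cells i).1, r))
              (Or.inl ⟨(g.cells j).1, (g.cells i).1, hjS, hiS, lt_of_le_of_ne hx hxne, rfl⟩)
              ((contains_gp21_iff g _ _).mpr ⟨j, i, hij, hp', ?_, ?_⟩)
            · rw [← hjeq]
            · rw [← hieq]
      · simp only; omega
  · -- x-bound
    show (gammaCell r S (g.cells i)).1 < t
    rw [gammaCell_fst]; exact (hbound i).1
  · -- y-bound
    show (gammaCell r S (g.cells i)).2 < u + 1
    have := (hbound i).2
    rcases gammaCell_snd r S (g.cells i) with h | h <;> omega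
  · -- obstruction avoidance
    rintro o (⟨o0, ho0, rfl⟩ | (⟨i, hit, hiS, rfl⟩ | ⟨i, hit, hiS, rfl⟩))
    · exact fun hcon => havoid o0 ho0.1 ((rowSepMap_contains_iff r S g o0).mp hcon)
    · rw [contains_gp1_iff]
      rintro ⟨k, hk⟩
      have hk' : gammaCell r S (g.cells k) = (i, r) := hk
      unfold gammaCell at hk'
      split at hk'
      · next hcond =>
        rw [hk'] at hcond
        simp only at hcond
        rcases hcond with hcond | hcond
        · omega
        · exact hiS hcond.2
      · next hcond =>
        have : (g.cells k).2 + 1 = r := congrArg Prod.snd hk'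
        exact hcond (Or.inl (by omega))
    · rw [contains_gp1_iff]
      rintro ⟨k, hk⟩
      have hk' : gammaCell r S (g.cells k) = (i, r + 1) := hk
      unfold gammaCell at hk'
      split at hk'
      · next hcond =>
        rw [hk'] at hcond
        simp only at hcond
        rcases hcond with hcond | hcond <;> omega
      · next hcond =>
        have h1 : (g.cells k).1 = i := congrArg Prod.fst hk'
        have h2 : (g.cells k).2 + 1 = r + 1 := congrArg Prod.snd hk'
        exact hcond (Or.inr ⟨by omega, by rw [h1]; exact hiS⟩)
  · -- requirements
    intro Ri' hRi'
    rw [List.mem_map] at hRi'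
    obtain ⟨Ri, hRi, rfl⟩ := hRi'
    obtain ⟨x, hx, hgx⟩ := hreq Ri hRi
    exact ⟨rowSepMap r S x, ⟨x, hx, rfl⟩, (rowSepMap_contains_iff r S g x).mpr hgx⟩

/-- Backward direction: every element of `Grid(𝒯')` is `Γ` of an element of `Grid(𝒯)`. -/
lemma sepGrid_surj (t u r : ℕ) (hr : r < u) (S : Set ℕ) (O : Set GP)
    (R : List (Set GP)) (hC : Crit r S ∩ Ggrid t u ⊆ O) {h : GP}
    (hh : h ∈ sepGrid t u r S O R) :
    ∃ g ∈ GridSet t u O R, rowSepMap r S g = h := by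
  obtain ⟨⟨hcons, hbound⟩, havoid, hreq⟩ := hh
  have hnoc1 : ∀ k : Fin h.n, (h.cells k).2 = r → (h.cells k).1 ∈ S := by
    intro k hk
    by_contra hns
    exact havoid (gp1 ((h.cells k).1, r)) (Or.inr (Or.inl ⟨_, (hbound k).1, hns, rfl⟩))
      ((contains_gp1_iff h _).mpr ⟨k, by rw [← hk]⟩)
  have hnoc2 : ∀ k : Fin h.n, (h.cells k).2 = r + 1 → (h.cells k).1 ∉ S := by
    intro k hk
    by_contra hns
    exact havoid (gp1 ((h.cells k).1, r + 1)) (Or.inr (Or.inr ⟨_, (hbound k).1, hns, rfl⟩))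
      ((contains_gp1_iff h _).mpr ⟨k, by rw [← hk]⟩)
  refine ⟨rowSepInv r h, ⟨⟨⟨fun i j hij => ?_, fun i j hp => ?_⟩, fun i => ⟨?_, ?_⟩⟩,
    ?_, ?_⟩, ?_⟩
  · -- x-consistency
    show (deltaCell r (h.cells i)).1 ≤ (deltaCell r (h.cells j)).1
    rw [deltaCell_fst, deltaCell_fst]
    exact hcons.1 i j hij
  · -- y-consistency
    show (deltaCell r (h.cells i)).2 ≤ (deltaCell r (h.cells j)).2
    have hp' : h.perm i < h.perm j := hp
    have hy := hcons.2 i j hp'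
    unfold deltaCell
    split <;> split <;> (try simp) <;> omega
  · show (deltaCell r (h.cells i)).1 < t
    rw [deltaCell_fst]; exact (hbound i).1
  · show (deltaCell r (h.cells i)).2 < u
    have := (hbound i).2
    unfold deltaCell
    split <;> (try simp) <;> omega
  · -- avoids every obstruction in O
    intro o hoO
    by_cases hcrit : o ∈ Crit r S ∩ Ggrid t u
    · intro hcon
      rcases hcrit.1 with ⟨i, i', hiS, hi'S, hlt, rfl⟩ | ⟨i, i', hi'S, hiS, hlt, rfl⟩
      · obtain ⟨p, q, hpq, hperm, hc1, hc2⟩ := (contains_gp21_iff _ _ _).mp hcon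
        have hc1' : deltaCell r (h.cells p) = (i, r) := hc1
        have hc2' : deltaCell r (h.cells q) = (i', r) := hc2
        have hp1 : h.cells p = (i, r) := by
          unfold deltaCell at hc1'
          split at hc1'
          · exact hc1'
          · next hgt =>
            exfalso
            have e1 : (h.cells p).1 = i := congrArg Prod.fst hc1'
            have e2 : (h.cells p).2 - 1 = r := congrArg Prod.snd hc1'
            exact hnoc2 p (by omega) (e1 ▸ hiS)
        have hq1 : h.cells q = (i', r + 1) := by
          unfold deltaCell at hc2'
          split at hc2'
          · exfalso
            have e1 : (h.cells q).1 = i' := congrArg Prod.fst hc2'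
            have e2 : (h.cells q).2 = r := congrArg Prod.snd hc2'
            exact hi'S (e1 ▸ hnoc1 q e2)
          · next hgt =>
            have e1 : (h.cells q).1 = i' := congrArg Prod.fst hc2'
            have e2 : (h.cells q).2 - 1 = r := congrArg Prod.snd hc2'
            have : (h.cells q).2 = r + 1 := by omega
            rw [← e1, ← this]
        have := hcons.2 q p hperm
        rw [hp1, hq1] at this
        exact absurd (show r + 1 ≤ r from this) (by omega)
      · obtain ⟨p, q, hpq, hperm, hc1, hc2⟩ := (contains_gp12_iff _ _ _).mp hcon
        have hc1' : deltaCell r (h.cells p) = (i', r) := hc1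
        have hc2' : deltaCell r (h.cells q) = (i, r) := hc2
        have hp1 : h.cells p = (i', r + 1) := by
          unfold deltaCell at hc1'
          split at hc1'
          · exfalso
            have e1 : (h.cells p).1 = i' := congrArg Prod.fst hc1'
            have e2 : (h.cells p).2 = r := congrArg Prod.snd hc1'
            exact hi'S (e1 ▸ hnoc1 p e2)
          · next hgt =>
            have e1 : (h.cells p).1 = i' := congrArg Prod.fst hc1'
            have e2 : (h.cells p).2 - 1 = r := congrArg Prod.snd hc1'
            have : (h.cells p).2 = r + 1 := by omega
            rw [← e1, ← this]
        have hq1 : h.cells q = (i, r) := by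
          unfold deltaCell at hc2'
          split at hc2'
          · exact hc2'
          · next hgt =>
            exfalso
            have e1 : (h.cells q).1 = i := congrArg Prod.fst hc2'
            have e2 : (h.cells q).2 - 1 = r := congrArg Prod.snd hc2'
            exact hnoc2 q (by omega) (e1 ▸ hiS)
        have := hcons.2 p q hperm
        rw [hp1, hq1] at this
        exact absurd (show r + 1 ≤ r from this) (by omega)
    · intro hcon
      have hΓ : rowSepMap r S (rowSepInv r h) = h := by
        cases h with
        | mk n p c =>
          simp only [rowSepInv, rowSepMap, GP.mk.injEq, heq_eq_eq, true_and]
          funext i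
          exact gamma_delta_cond r S (c i) (hnoc1 i) (hnoc2 i)
      refine havoid (rowSepMap r S o) (Or.inl ⟨o, ⟨hoO, hcrit⟩, rfl⟩) ?_
      rw [← hΓ]
      exact (rowSepMap_contains_iff r S _ o).mpr hcon
  · -- requirements
    intro Ri hRi
    have hΓ : rowSepMap r S (rowSepInv r h) = h := by
      cases h with
      | mk n p c =>
        simp only [rowSepInv, rowSepMap, GP.mk.injEq, heq_eq_eq, true_and]
        funext i
        exact gamma_delta_cond r S (c i) (hnoc1 i) (hnoc2 i)
    obtain ⟨x', ⟨x, hx, rfl⟩, hcon⟩ := hreq (rowSepMap r S '' Ri) (List.mem_map_of_mem hRi)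
    rw [← hΓ] at hcon
    exact ⟨x, hx, (rowSepMap_contains_iff r S _ x).mp hcon⟩
  · -- Γ ∘ Δ = id on h
    cases h with
    | mk n p c =>
      simp only [rowSepInv, rowSepMap, GP.mk.injEq, heq_eq_eq, true_and]
      funext i
      exact gamma_delta_cond r S (c i) (hnoc1 i) (hnoc2 i)

/-- Row separation is an equivalence strategy: `Γ` restricted to `Grid(𝒯)` is a
size-preserving bijection onto `Grid(𝒯')`; in particular for every `n` the two sets
have the same number of gridded permutations of size `n`. -/
theorem rowSep_equivalence (t u r : ℕ) (hr : r < u) (S : Set ℕ)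
    (O : Set GP) (R : List (Set GP))
    (hO : O ⊆ Ggrid t u) (hR : ∀ Ri ∈ R, Ri ⊆ Ggrid t u)
    (hC : Crit r S ∩ Ggrid t u ⊆ O)
    (hanti : ∀ o1 ∈ O, ∀ o2 ∈ O, o1.Contains o2 → o1 = o2)
    (hRavoid : ∀ Ri ∈ R, ∀ x ∈ Ri, AvoidsCrit r S x) :
    Set.BijOn (rowSepMap r S) (GridSet t u O R) (sepGrid t u r S O R) ∧
    (∀ g ∈ GridSet t u O R, (rowSepMap r S g).n = g.n) ∧
    ∀ m : ℕ, sizeCount (GridSet t u O R) m = sizeCount (sepGrid t u r S O R) m := by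
  have hmaps : Set.MapsTo (rowSepMap r S) (GridSet t u O R) (sepGrid t u r S O R) :=
    fun g hg => rowSepMap_mem_sepGrid t u r hr S O R hC hg
  have hsurj : Set.SurjOn (rowSepMap r S) (GridSet t u O R) (sepGrid t u r S O R) := by
    intro h hh
    obtain ⟨g, hg, hΓ⟩ := sepGrid_surj t u r hr S O R hC hh
    exact ⟨g, hg, hΓ⟩
  have hinj : Set.InjOn (rowSepMap r S) (GridSet t u O R) :=
    fun a _ b _ hab => rowSepMap_injective r S hab
  refine ⟨⟨hmaps, hinj, hsurj⟩, fun g _ => rfl, fun m => ?_⟩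
  apply Nat.card_congr
  refine Equiv.ofBijective (fun x => ⟨rowSepMap r S x.1, hmaps x.2.1, x.2.2⟩) ⟨?_, ?_⟩
  · intro a b hab
    exact Subtype.ext (rowSepMap_injective r S (congrArg Subtype.val hab))
  · rintro ⟨h, hB, hn⟩
    obtain ⟨g, hg, hΓ⟩ := hsurj hB
    refine ⟨⟨g, hg, ?_⟩, Subtype.ext hΓ⟩
    have e : (rowSepMap r S g).n = h.n := congrArg GP.n hΓ
    have e2 : g.n = h.n := e
    exact e2.trans hn
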